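/- The generalized Cramér-Rao inequality with bias correction: if an estimator T for the family {P_θ} satisfies ∫ T^j ∂_k dP_θ = A^j_k with A an invertible m × m matrix, and J_θ is the invertible Fisher information, then the mean square error matrix about the mean satisfies Cov_θ[T] ⪰ A J_θ^{-1} Aᵀ in the Loewner order. -/

import Mathlib

open MeasureTheory
open scoped ENNReal NNReal Matrix

private lemma cr_integrable_mul {Ω : Type*} [MeasurableSpace Ω] {P : Measure Ω}
    {f g : Ω → ℝ} (hf : MemLp f 2 P) (hg : MemLp g 2 P) :
    Integrable (fun ω => f ω * g ω) P := by
  have h := hg.smul (φ := f) hf (p := 2) (q := 2) (r := 1)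
  rw [memLp_one_iff_integrable] at h
  exact h

private lemma cr_integral_sum_mul_sum {Ω : Type*} [MeasurableSpace Ω] {P : Measure Ω} {m : ℕ}
    (f g : Fin m → Ω → ℝ) (hf : ∀ i, MemLp (f i) 2 P) (hg : ∀ j, MemLp (g j) 2 P)
    (a b : Fin m → ℝ) :
    ∫ ω, (∑ i, a i * f i ω) * (∑ j, b j * g j ω) ∂P
      = ∑ i, ∑ j, a i * b j * ∫ ω, f i ω * g j ω ∂P := by
  have hfg : ∀ i j, Integrable (fun ω => a i * b j * (f i ω * g j ω)) P :=
    fun i j => (cr_integrable_mul (hf i) (hg j)).const_mul _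
  have h1 : ∀ ω, (∑ i, a i * f i ω) * (∑ j, b j * g j ω)
      = ∑ i, ∑ j, a i * b j * (f i ω * g j ω) := by
    intro ω
    rw [Finset.sum_mul]
    refine Finset.sum_congr rfl fun i _ => ?_
    rw [Finset.mul_sum]
    exact Finset.sum_congr rfl fun j _ => by ring
  calc ∫ ω, (∑ i, a i * f i ω) * (∑ j, b j * g j ω) ∂P
      = ∫ ω, ∑ i, ∑ j, a i * b j * (f i ω * g j ω) ∂P :=
        integral_congr_ae (Filter.Eventually.of_forall h1)
    _ = ∑ i, ∫ ω, ∑ j, a i * b j * (f i ω * g j ω) ∂P :=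
        integral_finset_sum _ (fun i _ => integrable_finset_sum _ (fun j _ => hfg i j))
    _ = ∑ i, ∑ j, ∫ ω, a i * b j * (f i ω * g j ω) ∂P :=
        Finset.sum_congr rfl fun i _ => integral_finset_sum _ (fun j _ => hfg i j)
    _ = ∑ i, ∑ j, a i * b j * ∫ ω, f i ω * g j ω ∂P :=
        Finset.sum_congr rfl fun i _ => Finset.sum_congr rfl fun j _ => integral_const_mul _ _

/-- generalized Cramér–Rao inequality with bias correction.
If the estimator `T` satisfies `∫ T^j ∂_k dP_θ = A^j_k` with `A` invertible, and the
Fisher information `J` is invertible, then the covariance matrix about the mean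
satisfies `Cov ⪰ A J⁻¹ Aᵀ` in the Loewner order. -/
theorem generalized_cramer_rao_bias
    {Ω : Type*} [MeasurableSpace Ω] (ν : Measure Ω) {m : ℕ}
    (p : (Fin m → ℝ) → Ω → ℝ) (dp : Fin m → Ω → ℝ) (θ₀ : Fin m → ℝ)
    (T : Fin m → Ω → ℝ)
    -- the family of densities:
    (hp_meas : ∀ θ, Measurable (p θ))
    (hp_pos : ∀ ω, 0 < p θ₀ ω)
    (hp_prob : ∀ θ, ∫ ω, p θ ω ∂ν = 1)
    -- differentiability in θ at θ₀ (coordinatewise partial derivatives):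
    (hderiv : ∀ i ω, HasDerivAt (fun t => p (Function.update θ₀ i t) ω) (dp i ω) (θ₀ i))
    -- the distribution at θ₀:
    (P : Measure Ω)
    (hP : P = ν.withDensity (fun ω => ENNReal.ofReal (p θ₀ ω)))
    -- the score functions:
    (s : Fin m → Ω → ℝ)
    (hs : ∀ i ω, s i ω = dp i ω / p θ₀ ω)
    (hs2 : ∀ i, MemLp (s i) 2 P)
    -- differentiation under the integral applied to the normalization:
    (h_dui0 : ∀ i, ∫ ω, dp i ω ∂ν = 0)
    (hT2 : ∀ j, MemLp (T j) 2 P)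
    -- the bias-correction matrix `A` (derivative of the expectation of `T`):
    (A : Matrix (Fin m) (Fin m) ℝ) (hAinv : IsUnit A.det)
    (h_local : ∀ j k, ∫ ω, T j ω * dp k ω ∂ν = A j k)
    -- the mean of T:
    (μT : Fin m → ℝ) (hμT : ∀ j, μT j = ∫ ω, T j ω ∂P)
    -- Fisher information matrix and covariance matrix about the mean:
    (J Cov : Matrix (Fin m) (Fin m) ℝ)
    (hJ : ∀ i j, J i j = ∫ ω, s i ω * s j ω ∂P)
    (hJinv : IsUnit J.det)
    (hCov : ∀ i j, Cov i j = ∫ ω, (T i ω - μT i) * (T j ω - μT j) ∂P) :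
    (Cov - A * J⁻¹ * A.transpose).PosSemidef := by
  -- transfer integrals over `P` to integrals over `ν`
  have hconv : ∀ f : Ω → ℝ, ∫ ω, f ω ∂P = ∫ ω, p θ₀ ω * f ω ∂ν := by
    intro f
    rw [hP]
    have hd : (fun ω => ENNReal.ofReal (p θ₀ ω))
        = fun ω => ((p θ₀ ω).toNNReal : ℝ≥0∞) := rfl
    rw [hd, integral_withDensity_eq_integral_smul ((hp_meas θ₀).real_toNNReal) f]
    refine integral_congr_ae (Filter.Eventually.of_forall fun ω => ?_)
    simp [NNReal.smul_def, Real.coe_toNNReal _ (hp_pos ω).le]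
  -- `P` is a finite measure
  have hq_int : Integrable (p θ₀) ν := by
    by_contra h
    have := hp_prob θ₀
    rw [integral_undef h] at this
    exact one_ne_zero this.symm
  haveI : IsFiniteMeasure P := by
    constructor
    rw [hP, withDensity_apply _ MeasurableSet.univ, setLIntegral_univ,
      ← ofReal_integral_eq_lintegral_ofReal hq_int
        (Filter.Eventually.of_forall fun ω => (hp_pos ω).le), hp_prob θ₀]
    simp
  -- basic moment identities
  have hs_mul : ∀ k ω, p θ₀ ω * s k ω = dp k ω := by
    intro k ω
    rw [hs, mul_comm, div_mul_cancel₀ _ (hp_pos ω).ne']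
  have hEs : ∀ k, ∫ ω, s k ω ∂P = 0 := by
    intro k
    rw [hconv]
    rw [integral_congr_ae (Filter.Eventually.of_forall fun ω => hs_mul k ω)]
    exact h_dui0 k
  have hETs : ∀ j k, ∫ ω, T j ω * s k ω ∂P = A j k := by
    intro j k
    rw [hconv]
    have : ∀ ω, p θ₀ ω * (T j ω * s k ω) = T j ω * dp k ω := by
      intro ω
      rw [← hs_mul k ω]; ring
    rw [integral_congr_ae (Filter.Eventually.of_forall this)]
    exact h_local j k
  have hs_int : ∀ k, Integrable (s k) P := fun k => (hs2 k).integrable one_le_two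
  have hTc2 : ∀ j, MemLp (fun ω => T j ω - μT j) 2 P :=
    fun j => (hT2 j).sub (memLp_const _)
  have hE_cs : ∀ i k, ∫ ω, (T i ω - μT i) * s k ω ∂P = A i k := by
    intro i k
    have h1 : ∀ ω, (T i ω - μT i) * s k ω = T i ω * s k ω - μT i * s k ω := by
      intro ω; ring
    rw [integral_congr_ae (Filter.Eventually.of_forall h1),
      integral_sub (cr_integrable_mul (hT2 i) (hs2 k)) ((hs_int k).const_mul _),
      integral_const_mul, hETs, hEs]
    ring
  -- symmetry facts
  have hJsymm : J.transpose = J := by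
    ext i j
    rw [Matrix.transpose_apply, hJ, hJ]
    exact integral_congr_ae (Filter.Eventually.of_forall fun ω => mul_comm _ _)
  have hJinvsymm : (J⁻¹).transpose = J⁻¹ := by
    rw [Matrix.transpose_nonsing_inv, hJsymm]
  have hCovsymm : Cov.transpose = Cov := by
    ext i j
    rw [Matrix.transpose_apply, hCov, hCov]
    exact integral_congr_ae (Filter.Eventually.of_forall fun ω => mul_comm _ _)
  rw [Matrix.posSemidef_iff_dotProduct_mulVec]
  constructor
  · -- Hermitian part
    show (Cov - A * J⁻¹ * A.transpose).conjTranspose = _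
    have : ∀ M : Matrix (Fin m) (Fin m) ℝ, M.conjTranspose = M.transpose := by
      intro M; ext i j; simp [Matrix.conjTranspose_apply]
    rw [this, Matrix.transpose_sub, hCovsymm, Matrix.transpose_mul, Matrix.transpose_mul,
      Matrix.transpose_transpose, hJinvsymm, Matrix.mul_assoc]
  · -- quadratic form part
    intro x
    set z : Fin m → ℝ := A.transpose.mulVec x with hz
    set y : Fin m → ℝ := (J⁻¹).mulVec z with hy
    set U : Ω → ℝ := fun ω => ∑ i, x i * (T i ω - μT i) with hU
    set V : Ω → ℝ := fun ω => ∑ j, y j * s j ω with hV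
    have hU2 : MemLp U 2 P :=
      memLp_finset_sum _ (fun i _ => (hTc2 i).const_mul (x i))
    have hV2 : MemLp V 2 P :=
      memLp_finset_sum _ (fun j _ => (hs2 j).const_mul (y j))
    -- the three second moments
    have hIUU : ∫ ω, U ω * U ω ∂P = x ⬝ᵥ Cov.mulVec x := by
      have e1 := cr_integral_sum_mul_sum (fun i ω => T i ω - μT i)
        (fun i ω => T i ω - μT i) hTc2 hTc2 x x
      simp only [hU]
      rw [e1]
      simp only [dotProduct, Matrix.mulVec, Finset.mul_sum]
      refine Finset.sum_congr rfl fun i _ => Finset.sum_congr rfl fun j _ => ?_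
      rw [← hCov]; ring
    have hIUV : ∫ ω, U ω * V ω ∂P = z ⬝ᵥ y := by
      have e2 := cr_integral_sum_mul_sum (fun i ω => T i ω - μT i) s hTc2 hs2 x y
      simp only [hU, hV]
      rw [e2]
      have : ∀ i j, x i * y j * ∫ ω, (T i ω - μT i) * s j ω ∂P = x i * (A i j * y j) := by
        intro i j; rw [hE_cs]; ring
      simp only [this]
      rw [Finset.sum_comm]
      simp only [dotProduct, hz, Matrix.mulVec, Matrix.transpose_apply, Finset.sum_mul]
      refine Finset.sum_congr rfl fun j _ => Finset.sum_congr rfl fun i _ => by ring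
    have hIVV : ∫ ω, V ω * V ω ∂P = y ⬝ᵥ J.mulVec y := by
      have e3 := cr_integral_sum_mul_sum s s hs2 hs2 y y
      simp only [hV]
      rw [e3]
      simp only [dotProduct, Matrix.mulVec, Finset.mul_sum]
      refine Finset.sum_congr rfl fun i _ => Finset.sum_congr rfl fun j _ => ?_
      rw [← hJ]; ring
    -- identify the quadratic forms
    have hJy : J.mulVec y = z := by
      rw [hy, Matrix.mulVec_mulVec, Matrix.mul_nonsing_inv J hJinv, Matrix.one_mulVec]
    have hVVeq : ∫ ω, V ω * V ω ∂P = z ⬝ᵥ y := by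
      rw [hIVV, hJy, dotProduct_comm]
    have hc : x ⬝ᵥ (A * J⁻¹ * A.transpose).mulVec x = z ⬝ᵥ y := by
      rw [Matrix.mul_assoc, ← Matrix.mulVec_mulVec, ← Matrix.mulVec_mulVec,
        ← hz, ← hy, Matrix.dotProduct_mulVec, ← Matrix.mulVec_transpose, ← hz]
    -- nonnegativity from `∫ (U - V)^2 ≥ 0`
    have h0 : (0:ℝ) ≤ ∫ ω, (U ω - V ω) * (U ω - V ω) ∂P :=
      integral_nonneg fun ω => mul_self_nonneg _
    have hexp : ∫ ω, (U ω - V ω) * (U ω - V ω) ∂P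
        = (∫ ω, U ω * U ω ∂P) - 2 * (∫ ω, U ω * V ω ∂P) + ∫ ω, V ω * V ω ∂P := by
      have h1 : ∀ ω, (U ω - V ω) * (U ω - V ω)
          = U ω * U ω - 2 * (U ω * V ω) + V ω * V ω := fun ω => by ring
      have i1 : Integrable (fun ω => U ω * U ω) P := cr_integrable_mul hU2 hU2
      have i2 : Integrable (fun ω => 2 * (U ω * V ω)) P :=
        (cr_integrable_mul hU2 hV2).const_mul 2
      have i3 : Integrable (fun ω => V ω * V ω) P := cr_integrable_mul hV2 hV2
      have i12 : Integrable (fun ω => U ω * U ω - 2 * (U ω * V ω)) P := i1.sub i2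
      rw [integral_congr_ae (Filter.Eventually.of_forall h1),
        integral_add i12 i3, integral_sub i1 i2, integral_const_mul]
    have key : (0:ℝ) ≤ x ⬝ᵥ Cov.mulVec x - z ⬝ᵥ y := by
      have := h0
      rw [hexp, hIUU, hIUV, hVVeq] at this
      linarith
    simpa [Matrix.sub_mulVec, dotProduct_sub, hc] using key
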